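/- arXiv:1912.01395 — 2 statements merged into one kernel-verified Lean document; each statement's English description precedes it below -/
import Mathlib

section
/- Let y : [0,1] → ℝ be three times differentiable with |y'''(t)| ≤ ξ₁ for all t ∈ [0,1], and define the Haar coefficients a_{2^j+k+1} = 2^j ∫₀¹ y''(t) h_{2^j+k+1}(t) dt for integers j ≥ 0 and 0 ≤ k ≤ 2^j − 1. Then for every integer J ≥ 0, the truncation error function Ẽ_{M1}(t) = Σ_{j=J+1}^∞ Σ_{k=0}^{2^j−1} a_{2^j+k+1} (p_{2,2^j+k+1}(t) − p_{2,2^j+k+1}(1)) satisfies the L²([0,1]) bound ‖Ẽ_{M1}‖₂ ≤ (ξ₁/3)·(2^{−(J+1)})². -/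
open MeasureTheory Real

/-- Left endpoint of the support of the Haar wavelet indexed by `(j, k)`. -/
noncomputable def eta1 (j k : ℕ) : ℝ := (k : ℝ) / 2 ^ j

/-- Midpoint of the support of the Haar wavelet indexed by `(j, k)`. -/
noncomputable def eta2 (j k : ℕ) : ℝ := (2 * (k : ℝ) + 1) / 2 ^ (j + 1)

/-- Right endpoint of the support of the Haar wavelet indexed by `(j, k)`. -/
noncomputable def eta3 (j k : ℕ) : ℝ := ((k : ℝ) + 1) / 2 ^ j

/-- The Haar wavelet `h_i` with `i = 2^j + k + 1`: equals `1` on `[η₁, η₂)`,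
`-1` on `[η₂, η₃)` and `0` elsewhere. -/
noncomputable def haarJK (j k : ℕ) (t : ℝ) : ℝ :=
  if eta1 j k ≤ t ∧ t < eta2 j k then 1
  else if eta2 j k ≤ t ∧ t < eta3 j k then -1
  else 0

/-- `p_{2,i}(t) = ∫₀ᵗ (t - s) h_i(s) ds` where `i = 2^j + k + 1`. -/
noncomputable def p2JK (j k : ℕ) (t : ℝ) : ℝ := ∫ s in (0:ℝ)..t, (t - s) * haarJK j k s

/-- The Haar coefficient `2^j ∫₀¹ f(t) h_{2^j+k+1}(t) dt` of a function `f`. -/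
noncomputable def haarCoeff (f : ℝ → ℝ) (j k : ℕ) : ℝ :=
  2 ^ j * ∫ t in (0:ℝ)..1, f t * haarJK j k t

/-- Truncation error of the Haar expansion at resolution `J`:
`Σ_{j=J+1}^∞ Σ_{k=0}^{2^j-1} c_{j,k} p_{2,2^j+k+1}(t)` (here the outer sum is
reindexed by `j = J + 1 + m`). -/
noncomputable def truncErr (c : ℕ → ℕ → ℝ) (J : ℕ) (t : ℝ) : ℝ :=
  ∑' m : ℕ, ∑ k ∈ Finset.range (2 ^ (J + 1 + m)), c (J + 1 + m) k * p2JK (J + 1 + m) k t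

/-- The `L²([0,1])` norm of a function. -/
noncomputable def L2norm (f : ℝ → ℝ) : ℝ := Real.sqrt (∫ t in (0:ℝ)..1, f t ^ 2)

/-- Truncation error of the Haar expansion in the BVP case, at resolution `J`:
`Σ_{j=J+1}^∞ Σ_{k=0}^{2^j-1} c_{j,k} (p_{2,2^j+k+1}(t) - p_{2,2^j+k+1}(1))`
(the outer sum is reindexed by `j = J + 1 + m`). -/
noncomputable def truncErrBVP (c : ℕ → ℕ → ℝ) (J : ℕ) (t : ℝ) : ℝ :=
  ∑' m : ℕ, ∑ k ∈ Finset.range (2 ^ (J + 1 + m)),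
    c (J + 1 + m) k * (p2JK (J + 1 + m) k t - p2JK (J + 1 + m) k 1)


-- ===== auxiliary lemmas =====
section Aux
open Set

lemma d_pos' (j : ℕ) : (0:ℝ) < ((2:ℝ) ^ (j+1))⁻¹ := by positivity

lemma eta2_eq' (j k : ℕ) : eta2 j k = eta1 j k + (2 ^ (j+1))⁻¹ := by
  have h : (2:ℝ)^j ≠ 0 := by positivity
  have h1 : (2:ℝ)^(j+1) ≠ 0 := by positivity
  simp only [eta1, eta2, pow_succ]
  ring

lemma eta3_eq' (j k : ℕ) : eta3 j k = eta1 j k + (2 ^ (j+1))⁻¹ + (2 ^ (j+1))⁻¹ := by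
  have h : (2:ℝ)^j ≠ 0 := by positivity
  have h1 : (2:ℝ)^(j+1) ≠ 0 := by positivity
  simp only [eta1, eta3, pow_succ]
  ring

lemma eta1_nonneg' (j k : ℕ) : 0 ≤ eta1 j k := div_nonneg (Nat.cast_nonneg k) (by positivity)

lemma eta3_le_one' (j k : ℕ) (hk : k < 2 ^ j) : eta3 j k ≤ 1 := by
  rw [eta3, div_le_one (by positivity)]
  have : (k:ℝ) + 1 ≤ (2:ℝ)^j := by exact_mod_cast Nat.succ_le_of_lt hk
  simpa using this

lemma eta1_le_eta2' (j k : ℕ) : eta1 j k ≤ eta2 j k := by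
  rw [eta2_eq']; linarith [d_pos' j]
lemma eta2_le_eta3' (j k : ℕ) : eta2 j k ≤ eta3 j k := by
  rw [eta2_eq', eta3_eq']; linarith [d_pos' j]

lemma haar_eq' (j k : ℕ) (s : ℝ) :
    haarJK j k s = (Set.Ico (eta1 j k) (eta2 j k)).indicator 1 s
      - (Set.Ico (eta2 j k) (eta3 j k)).indicator 1 s := by
  have h12 : eta1 j k ≤ eta2 j k := eta1_le_eta2' j k
  simp only [haarJK, Set.indicator_apply, Set.mem_Ico, Pi.one_apply]
  split_ifs <;> simp_all <;> linarith

lemma int_ind (g : ℝ → ℝ) (a b t : ℝ) (h0 : 0 ≤ a) (hab : a ≤ b) (ht : 0 ≤ t) :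
    ∫ s in (0:ℝ)..t, g s * (Set.Ico a b).indicator 1 s = ∫ s in (min a t)..(min b t), g s := by
  have h1 : ∀ᵐ s : ℝ, s ≠ a := ae_iff.mpr (by simp)
  have h2 : ∀ᵐ s : ℝ, s ≠ b := ae_iff.mpr (by simp)
  have hcongr : ∫ s in (0:ℝ)..t, g s * (Set.Ico a b).indicator 1 s
      = ∫ s in (0:ℝ)..t, (Set.Ioc a b).indicator g s := by
    apply intervalIntegral.integral_congr_ae
    filter_upwards [h1, h2] with s hsa hsb _
    by_cases h : s ∈ Set.Ico a b
    · have h' : s ∈ Set.Ioc a b := ⟨lt_of_le_of_ne h.1 (Ne.symm hsa), le_of_lt h.2⟩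
      rw [Set.indicator_of_mem h, Set.indicator_of_mem h']
      simp [mul_comm]
    · have h' : s ∉ Set.Ioc a b := fun hc => h ⟨le_of_lt hc.1, lt_of_le_of_ne hc.2 hsb⟩
      rw [Set.indicator_of_notMem h, Set.indicator_of_notMem h']
      simp
  rw [hcongr, intervalIntegral.integral_of_le ht, setIntegral_indicator measurableSet_Ioc,
    Set.Ioc_inter_Ioc, intervalIntegral.integral_of_le (min_le_min hab le_rfl)]
  rcases le_total a t with h | h
  · rw [sup_eq_right.mpr h0, inf_eq_left.mpr h, inf_comm b t]
  · rw [Set.Ioc_eq_empty (by simp only [sup_eq_right.mpr h0]; exact not_lt.mpr (le_trans inf_le_left h)),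
      Set.Ioc_eq_empty (by rw [inf_eq_right.mpr h]; exact not_lt.mpr inf_le_right)]

lemma intInd (g : ℝ → ℝ) (hg : Continuous g) (a b t₀ t : ℝ) :
    IntervalIntegrable (fun s => g s * (Set.Ico a b).indicator 1 s) volume t₀ t := by
  have h : (fun s => g s * (Set.Ico a b).indicator 1 s) = (Set.Ico a b).indicator g := by
    funext s
    simp only [Set.indicator_apply, Pi.one_apply]
    split_ifs <;> simp
  rw [h, intervalIntegrable_iff]
  exact (intervalIntegrable_iff.mp (hg.intervalIntegrable t₀ t)).indicator measurableSet_Ico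

lemma lin_int (t p q : ℝ) : ∫ s in p..q, (t - s) = (t-p)^2/2 - (t-q)^2/2 := by
  have h : ∀ s ∈ Set.uIcc p q, HasDerivAt (fun s => t*s - s^2/2) (t - s) s := by
    intro s _
    have h1 : HasDerivAt (fun s : ℝ => t*s) t s := by
      simpa using (hasDerivAt_id s).const_mul t
    have h2 : HasDerivAt (fun s : ℝ => s^2/2) s s := by
      simpa using (hasDerivAt_pow 2 s).div_const 2
    exact h1.sub h2
  rw [intervalIntegral.integral_eq_sub_of_hasDerivAt h
    ((continuous_const.sub continuous_id).intervalIntegrable p q)]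
  ring

lemma p2_zero_of_nonpos (j k : ℕ) (t : ℝ) (ht : t ≤ 0) : p2JK j k t = 0 := by
  rw [p2JK]
  apply intervalIntegral.integral_zero_ae
  have h0 : ∀ᵐ s : ℝ, s ≠ 0 := ae_iff.mpr (by simp)
  filter_upwards [h0] with s hs hmem
  rw [Set.uIoc_of_ge ht] at hmem
  have hs0 : s < 0 := lt_of_le_of_ne hmem.2 hs
  have h1 : ¬ (eta1 j k ≤ s) := by linarith [eta1_nonneg' j k]
  have h2 : ¬ (eta2 j k ≤ s) := by linarith [eta1_nonneg' j k, eta1_le_eta2' j k]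
  rw [haarJK, if_neg (fun h => h1 h.1), if_neg (fun h => h2 h.1), mul_zero]

lemma p2_eq (j k : ℕ) (t : ℝ) :
    p2JK j k t = ((t - min (eta1 j k) t)^2 - 2*(t - min (eta2 j k) t)^2
      + (t - min (eta3 j k) t)^2)/2 := by
  rcases le_total t 0 with ht | ht
  · rw [p2_zero_of_nonpos j k t ht,
      min_eq_right (le_trans ht (eta1_nonneg' j k)),
      min_eq_right (le_trans ht (le_trans (eta1_nonneg' j k) (eta1_le_eta2' j k))),
      min_eq_right (le_trans ht (le_trans (eta1_nonneg' j k)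
        (le_trans (eta1_le_eta2' j k) (eta2_le_eta3' j k))))]
    ring
  · have hsplit : p2JK j k t
        = (∫ s in (0:ℝ)..t, (t - s) * (Set.Ico (eta1 j k) (eta2 j k)).indicator 1 s)
        - ∫ s in (0:ℝ)..t, (t - s) * (Set.Ico (eta2 j k) (eta3 j k)).indicator 1 s := by
      rw [p2JK, ← intervalIntegral.integral_sub
        (intInd _ (by continuity) _ _ _ _) (intInd _ (by continuity) _ _ _ _)]
      apply intervalIntegral.integral_congr
      intro s _
      simp only [haar_eq']
      ring
    rw [hsplit, int_ind _ _ _ _ (eta1_nonneg' j k) (eta1_le_eta2' j k) ht,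
      int_ind _ _ _ _ (le_trans (eta1_nonneg' j k) (eta1_le_eta2' j k)) (eta2_le_eta3' j k) ht,
      lin_int, lin_int]
    ring

lemma continuous_p2 (j k : ℕ) : Continuous (p2JK j k) := by
  have h : p2JK j k = fun t => ((t - min (eta1 j k) t)^2 - 2*(t - min (eta2 j k) t)^2
      + (t - min (eta3 j k) t)^2)/2 := funext (p2_eq j k)
  rw [h]
  have c1 : Continuous fun t : ℝ => t - min (eta1 j k) t :=
    continuous_id.sub (continuous_const.min continuous_id)
  have c2 : Continuous fun t : ℝ => t - min (eta2 j k) t :=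
    continuous_id.sub (continuous_const.min continuous_id)
  have c3 : Continuous fun t : ℝ => t - min (eta3 j k) t :=
    continuous_id.sub (continuous_const.min continuous_id)
  exact (((c1.pow 2).sub (continuous_const.mul (c2.pow 2))).add (c3.pow 2)).div_const 2

lemma p2_bounds (j k : ℕ) (t : ℝ) :
    0 ≤ p2JK j k t ∧ p2JK j k t ≤ (((2:ℝ) ^ (j+1))⁻¹)^2 := by
  set d := ((2:ℝ) ^ (j+1))⁻¹ with hd
  have hdpos := d_pos' j
  rcases le_total t 0 with ht | ht
  · rw [p2_zero_of_nonpos j k t ht]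
    exact ⟨le_rfl, by positivity⟩
  · rw [p2_eq j k t]
    have he2 := eta2_eq' j k
    have he3 := eta3_eq' j k
    set e := eta1 j k with he
    have he0 : 0 ≤ e := eta1_nonneg' j k
    rcases le_total t e with h1 | h1
    · rw [min_eq_right h1, min_eq_right (by linarith [eta1_le_eta2' j k]),
        min_eq_right (by linarith [eta1_le_eta2' j k, eta2_le_eta3' j k])]
      constructor <;> simp <;> positivity
    · rw [min_eq_left h1]
      rcases le_total t (eta2 j k) with h2 | h2
      · rw [min_eq_right h2, min_eq_right (by linarith [eta2_le_eta3' j k])]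
        constructor
        · nlinarith
        · nlinarith [he2 ▸ h2]
      · rw [min_eq_left h2]
        rcases le_total t (eta3 j k) with h3 | h3
        · rw [min_eq_right h3]
          rw [he2] at h2 ⊢
          rw [he3] at h3
          constructor <;> nlinarith
        · rw [min_eq_left h3]
          rw [he2] at h2 ⊢
          rw [he3] at h3 ⊢
          constructor <;> nlinarith

lemma p2_diff_bound (j k : ℕ) (t : ℝ) :
    |p2JK j k t - p2JK j k 1| ≤ (((2:ℝ) ^ (j+1))⁻¹)^2 := by
  obtain ⟨h1, h2⟩ := p2_bounds j k t
  obtain ⟨h3, h4⟩ := p2_bounds j k 1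
  rw [abs_le]
  constructor <;> linarith

lemma coeff_bound (y : ℝ → ℝ) (ξ₁ : ℝ)
    (hy' : Differentiable ℝ (deriv y)) (hy'' : Differentiable ℝ (deriv (deriv y)))
    (hb : ∀ t ∈ Set.Icc (0:ℝ) 1, |deriv (deriv (deriv y)) t| ≤ ξ₁)
    (j k : ℕ) (hk : k < 2 ^ j) :
    |haarCoeff (deriv (deriv y)) j k| ≤ ξ₁ * ((2:ℝ) ^ (j+1))⁻¹ / 2 := by
  set d := ((2:ℝ) ^ (j+1))⁻¹ with hd
  have hdpos := d_pos' j
  set e := eta1 j k with he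
  have he2 := eta2_eq' j k
  have he3 := eta3_eq' j k
  have he0 : 0 ≤ e := eta1_nonneg' j k
  have he31 : eta3 j k ≤ 1 := eta3_le_one' j k hk
  have hcont : Continuous (deriv (deriv y)) := hy''.continuous
  have hsplit : ∫ t in (0:ℝ)..1, deriv (deriv y) t * haarJK j k t
      = (∫ s in e..(eta2 j k), deriv (deriv y) s) - ∫ s in (eta2 j k)..(eta3 j k), deriv (deriv y) s := by
    have h1 : ∫ t in (0:ℝ)..1, deriv (deriv y) t * haarJK j k t
        = (∫ s in (0:ℝ)..1, deriv (deriv y) s * (Set.Ico e (eta2 j k)).indicator 1 s)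
        - ∫ s in (0:ℝ)..1, deriv (deriv y) s * (Set.Ico (eta2 j k) (eta3 j k)).indicator 1 s := by
      rw [← intervalIntegral.integral_sub (intInd _ hcont _ _ _ _) (intInd _ hcont _ _ _ _)]
      apply intervalIntegral.integral_congr
      intro s _
      simp only [haar_eq']
      ring
    have m1 : min e (1:ℝ) = e := min_eq_left (by linarith [eta1_le_eta2' j k, eta2_le_eta3' j k])
    have m2 : min (eta2 j k) (1:ℝ) = eta2 j k := min_eq_left (by linarith [eta2_le_eta3' j k])
    have m3 : min (eta3 j k) (1:ℝ) = eta3 j k := min_eq_left he31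
    rw [h1, int_ind _ _ _ _ he0 (eta1_le_eta2' j k) zero_le_one,
      int_ind _ _ _ _ (le_trans he0 (eta1_le_eta2' j k)) (eta2_le_eta3' j k) zero_le_one,
      m1, m2, m3]
  have hftc : ∀ a b : ℝ, ∫ s in a..b, deriv (deriv y) s = deriv y b - deriv y a := by
    intro a b
    exact intervalIntegral.integral_deriv_eq_sub (fun x _ => hy' x)
      (hcont.intervalIntegrable a b)
  have hξ : 0 ≤ ξ₁ := le_trans (abs_nonneg _) (hb 0 (by norm_num))
  have inner : ∀ x ∈ Set.Icc e (eta2 j k),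
      ‖deriv (deriv y) (x + d) - deriv (deriv y) x‖ ≤ ξ₁ * d := by
    intro x hx
    have hx1 : x + d ≤ 1 := by
      rw [he3] at he31
      rcases hx with ⟨hxl, hxr⟩
      rw [he2] at hxr
      linarith
    have hx0 : 0 ≤ x := le_trans he0 hx.1
    have := norm_image_sub_le_of_norm_deriv_le_segment'
      (f := deriv (deriv y)) (f' := deriv (deriv (deriv y))) (a := x) (b := x + d)
      (fun z _ => (hy'' z).hasDerivAt.hasDerivWithinAt)
      (fun z hz => by
        rw [Real.norm_eq_abs]
        exact hb z ⟨le_trans hx0 hz.1, by rcases hz with ⟨h1', h2'⟩; linarith⟩)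
      (x + d) ⟨by linarith, le_refl _⟩
    simpa using this
  have hgderiv : ∀ x : ℝ, HasDerivAt (fun x => deriv y (x + d) - deriv y x)
      (deriv (deriv y) (x + d) - deriv (deriv y) x) x := by
    intro x
    have h1 : HasDerivAt (fun x => deriv y (x + d)) (deriv (deriv y) (x + d)) x := by
      exact ((hy' (x + d)).hasDerivAt).comp_add_const x d
    exact h1.sub (hy' x).hasDerivAt
  have outer := norm_image_sub_le_of_norm_deriv_le_segment'
      (f := fun x => deriv y (x + d) - deriv y x)
      (f' := fun x => deriv (deriv y) (x + d) - deriv (deriv y) x)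
      (a := e) (b := eta2 j k)
      (fun z _ => (hgderiv z).hasDerivWithinAt)
      (fun z hz => inner z (Set.Ico_subset_Icc_self hz))
      (eta2 j k) ⟨eta1_le_eta2' j k, le_refl _⟩
  have key : |(∫ s in e..(eta2 j k), deriv (deriv y) s) - ∫ s in (eta2 j k)..(eta3 j k), deriv (deriv y) s|
      ≤ ξ₁ * d * d := by
    rw [hftc, hftc]
    have h1 : eta2 j k + d = eta3 j k := by rw [he2, he3]
    have h2 : e + d = eta2 j k := by rw [he2]
    rw [Real.norm_eq_abs] at outer
    have h3 : (deriv y (eta2 j k + d) - deriv y (eta2 j k)) - (deriv y (e + d) - deriv y e)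
        = -((deriv y (eta2 j k) - deriv y e) - (deriv y (eta3 j k) - deriv y (eta2 j k))) := by
      rw [h1, h2]; ring
    have h4 : eta2 j k - e = d := by rw [he2]; ring
    rw [h3, abs_neg] at outer
    calc |(deriv y (eta2 j k) - deriv y e) - (deriv y (eta3 j k) - deriv y (eta2 j k))|
        ≤ ξ₁ * d * (eta2 j k - e) := outer
      _ = ξ₁ * d * d := by rw [h4]
  rw [haarCoeff, hsplit, abs_mul, abs_pow, abs_two]
  have h2j : (2:ℝ)^j * (ξ₁ * d * d) = ξ₁ * d / 2 := by
    rw [hd]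
    have : ((2:ℝ) ^ (j+1))⁻¹ = (2^j * 2)⁻¹ := by rw [pow_succ]
    rw [this]
    field_simp
  calc (2:ℝ)^j * |(∫ s in e..(eta2 j k), deriv (deriv y) s) - ∫ s in (eta2 j k)..(eta3 j k), deriv (deriv y) s|
      ≤ (2:ℝ)^j * (ξ₁ * d * d) := by
        apply mul_le_mul_of_nonneg_left key (by positivity)
    _ = ξ₁ * d / 2 := h2j

end Aux
-- ===== end auxiliary lemmas =====

/-- the `L²` bound `‖Ẽ_{M1}‖₂ ≤ (ξ₁/3)·(2^{-(J+1)})²` on the BVP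
truncation error of the Haar expansion of `y''`, for `|y'''| ≤ ξ₁`. -/
theorem truncation_error_bound_bvp (y : ℝ → ℝ) (ξ₁ : ℝ)
    (hy : Differentiable ℝ y) (hy' : Differentiable ℝ (deriv y))
    (hy'' : Differentiable ℝ (deriv (deriv y)))
    (hb : ∀ t ∈ Set.Icc (0:ℝ) 1, |deriv (deriv (deriv y)) t| ≤ ξ₁)
    (J : ℕ) :
    L2norm (truncErrBVP (haarCoeff (deriv (deriv y))) J) ≤
      ξ₁ / 3 * (1 / 2 ^ (J + 1)) ^ 2 := by
  have hξ : 0 ≤ ξ₁ := le_trans (abs_nonneg _) (hb 0 (by norm_num))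
  set c := haarCoeff (deriv (deriv y)) with hc
  set F : ℕ → ℝ → ℝ := fun m t => ∑ k ∈ Finset.range (2 ^ (J + 1 + m)),
    c (J + 1 + m) k * (p2JK (J + 1 + m) k t - p2JK (J + 1 + m) k 1) with hF
  set C : ℝ := ξ₁ / 4 * (((2:ℝ) ^ (J+2))⁻¹)^2 with hC
  have hCnn : 0 ≤ C := by positivity
  -- uniform bound on each summand
  have hFb : ∀ m t, ‖F m t‖ ≤ C * (1/4 : ℝ)^m := by
    intro m t
    set j := J + 1 + m with hj
    set d := ((2:ℝ) ^ (j+1))⁻¹ with hd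
    have hdpos : (0:ℝ) < d := by positivity
    have step : ∀ k ∈ Finset.range (2 ^ j),
        ‖c j k * (p2JK j k t - p2JK j k 1)‖ ≤ (ξ₁ * d / 2) * d^2 := by
      intro k hk
      rw [Real.norm_eq_abs, abs_mul]
      have h1 := coeff_bound y ξ₁ hy' hy'' hb j k (Finset.mem_range.mp hk)
      have h2 := p2_diff_bound j k t
      have h3 : (0:ℝ) ≤ ξ₁ * d / 2 := by positivity
      exact mul_le_mul h1 h2 (abs_nonneg _) h3
    have hsum : ‖F m t‖ ≤ (2^j : ℝ) * ((ξ₁ * d / 2) * d^2) := by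
      calc ‖F m t‖ ≤ ∑ k ∈ Finset.range (2 ^ j), ‖c j k * (p2JK j k t - p2JK j k 1)‖ :=
            norm_sum_le _ _
        _ ≤ ∑ _k ∈ Finset.range (2 ^ j), (ξ₁ * d / 2) * d^2 := Finset.sum_le_sum step
        _ = (2^j : ℝ) * ((ξ₁ * d / 2) * d^2) := by
            rw [Finset.sum_const, Finset.card_range]
            push_cast
            ring
    have harith : (2^j : ℝ) * ((ξ₁ * d / 2) * d^2) = C * (1/4 : ℝ)^m := by
      have hjm : ((2:ℝ)^(j+1)) = (2:ℝ)^(J+1) * 2 * 2^m := by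
        rw [hj, show J+1+m+1 = (J+2)+m by omega, pow_add, pow_succ]
      have hj2 : ((2:ℝ)^j) = (2:ℝ)^(J+1) * 2^m := by
        rw [hj, pow_add]
      have hJ2 : ((2:ℝ)^(J+2)) = (2:ℝ)^(J+1) * 2 := by rw [pow_succ]
      have h4m : ((4:ℝ))^m = 2^m * 2^m := by
        rw [show (4:ℝ) = 2*2 by norm_num, mul_pow]
      rw [hd, hC, hj2, hjm, hJ2, one_div_pow, h4m]
      have p1 : ((2:ℝ)^(J+1)) ≠ 0 := by positivity
      have p2 : ((2:ℝ)^m) ≠ 0 := by positivity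
      field_simp
      ring
    rw [← harith]
    exact hsum
  have hu : Summable (fun m : ℕ => C * (1/4 : ℝ)^m) :=
    (summable_geometric_of_lt_one (by norm_num) (by norm_num)).mul_left C
  -- the truncation error is continuous
  have hFc : ∀ m, Continuous (F m) := by
    intro m
    apply continuous_finset_sum
    intro k _
    exact continuous_const.mul ((continuous_p2 (J + 1 + m) k).sub continuous_const)
  have hfc : Continuous (truncErrBVP c J) := by
    have h : truncErrBVP c J = fun t => ∑' m, F m t := rfl
    rw [h]
    exact continuous_tsum hFc hu hFb
  -- pointwise bound
  set M : ℝ := C * (4/3 : ℝ) with hM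
  have hMnn : 0 ≤ M := by positivity
  have hpt : ∀ t, |truncErrBVP c J t| ≤ M := by
    intro t
    have h1 : ‖∑' m, F m t‖ ≤ ∑' m, C * (1/4 : ℝ)^m :=
      tsum_of_norm_bounded hu.hasSum (fun m => hFb m t)
    have h2 : ∑' m, C * (1/4 : ℝ)^m = M := by
      rw [tsum_mul_left, tsum_geometric_of_lt_one (by norm_num) (by norm_num), hM]
      norm_num
    have hrw : truncErrBVP c J t = ∑' m, F m t := rfl
    rw [hrw, ← Real.norm_eq_abs]
    calc ‖∑' m, F m t‖ ≤ ∑' m, C * (1/4 : ℝ)^m := h1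
      _ = M := h2
  -- L² bound via sup bound
  have hint : ∫ t in (0:ℝ)..1, (truncErrBVP c J t)^2 ≤ M^2 := by
    have : ∫ t in (0:ℝ)..1, M^2 = M^2 := by simp
    rw [← this]
    apply intervalIntegral.integral_mono_on zero_le_one
      ((hfc.pow 2).intervalIntegrable 0 1) (intervalIntegrable_const)
    intro t _
    have := hpt t
    calc (truncErrBVP c J t)^2 = |truncErrBVP c J t|^2 := (sq_abs _).symm
      _ ≤ M^2 := by nlinarith [abs_nonneg (truncErrBVP c J t)]
  have hL2 : L2norm (truncErrBVP c J) ≤ M := by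
    rw [L2norm]
    calc Real.sqrt (∫ t in (0:ℝ)..1, (truncErrBVP c J t)^2) ≤ Real.sqrt (M^2) :=
          Real.sqrt_le_sqrt hint
      _ = M := by rw [Real.sqrt_sq hMnn]
  -- final arithmetic
  calc L2norm (truncErrBVP c J) ≤ M := hL2
    _ ≤ ξ₁ / 3 * (1 / 2 ^ (J + 1)) ^ 2 := by
      rw [hM, hC]
      have e1 : ((2:ℝ)^(J+2))⁻¹ = (1/2) * ((2:ℝ)^(J+1))⁻¹ := by
        rw [pow_succ]
        field_simp
      rw [e1]
      have h0 : (0:ℝ) < (2:ℝ)^(J+1) := by positivity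
      rw [div_pow, one_pow]
      have : (1:ℝ) / ((2:ℝ)^(J+1))^2 = (((2:ℝ)^(J+1))⁻¹)^2 := by
        rw [inv_pow, one_div]
      rw [this]
      have hq : (0:ℝ) ≤ (((2:ℝ)^(J+1))⁻¹)^2 := by positivity
      nlinarith [hq, hξ]
end

section
/- Let M ≥ 1, let a₁, …, a_{2M}, b₁, …, b_{2M} ∈ ℝ, and let n₁, n₂, v₁, v₂ ∈ (0,1) with n₁n₂v₁v₂ ≠ 1. Suppose y, z : ℝ → ℝ are twice differentiable with y''(t) = Σ_{i=1}^{2M} a_i h_i(t) and z''(t) = Σ_{i=1}^{2M} b_i h_i(t) for all t ∈ [0,1], and suppose the four-point boundary conditions y(0) = 0, y(1) = n₁ z(v₁), z(0) = 0, z(1) = n₂ y(v₂) hold. Then for all t ∈ [0,1]: y(t) = (n₁ t/(1 − n₁n₂v₁v₂))·[ n₂v₁ Σ_{i=1}^{2M} a_i (P_{2,i}(v₂) − v₂P_{2,i}(1)) + Σ_{i=1}^{2M} b_i (P_{2,i}(v₁) − v₁P_{2,i}(1)) ] + Σ_{i=1}^{2M} a_i (P_{2,i}(t) − t·P_{2,i}(1)),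 and z(t) = (n₂ t/(1 − n₁n₂v₁v₂))·[ Σ_{i=1}^{2M} a_i (P_{2,i}(v₂) − v₂P_{2,i}(1)) + v₂n₁ Σ_{i=1}^{2M} b_i (P_{2,i}(v₁) − v₁P_{2,i}(1)) ] + Σ_{i=1}^{2M} b_i (P_{2,i}(t) − t·P_{2,i}(1)). -/
open MeasureTheory Real

/-- The Haar wavelet family indexed by `i ≥ 1`: `h 1` is the indicator of `[0,1]`,
and for `i = 2^j + k + 1 ≥ 2` (with `0 ≤ k < 2^j`) it is the wavelet `haarJK j k`. -/
noncomputable def haar (i : ℕ) (t : ℝ) : ℝ :=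
  if i = 1 then (if 0 ≤ t ∧ t ≤ 1 then 1 else 0)
  else haarJK (Nat.log 2 (i - 1)) (i - 1 - 2 ^ Nat.log 2 (i - 1)) t

/-- `P_{1,i}(x) = ∫₀ˣ h_i(t) dt`. -/
noncomputable def P1 (i : ℕ) (x : ℝ) : ℝ := ∫ t in (0:ℝ)..x, haar i t

/-- `P_{2,i}(x) = ∫₀ˣ (x - t) h_i(t) dt`. -/
noncomputable def P2 (i : ℕ) (x : ℝ) : ℝ := ∫ t in (0:ℝ)..x, (x - t) * haar i t

lemma measurable_haarJK (j k : ℕ) : Measurable (haarJK j k) := by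
  unfold haarJK
  refine Measurable.ite ?_ measurable_const (Measurable.ite ?_ measurable_const
    measurable_const)
  · have : {t : ℝ | eta1 j k ≤ t ∧ t < eta2 j k} = Set.Ico (eta1 j k) (eta2 j k) := rfl
    rw [this]; exact measurableSet_Ico
  · have : {t : ℝ | eta2 j k ≤ t ∧ t < eta3 j k} = Set.Ico (eta2 j k) (eta3 j k) := rfl
    rw [this]; exact measurableSet_Ico

lemma measurable_haar (i : ℕ) : Measurable (haar i) := by
  by_cases hi : i = 1
  · have h : haar i = fun t => if 0 ≤ t ∧ t ≤ 1 then (1:ℝ) else 0 := by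
      funext t; simp [haar, hi]
    rw [h]
    exact Measurable.ite (by
      have : {t : ℝ | 0 ≤ t ∧ t ≤ 1} = Set.Icc 0 1 := rfl
      rw [this]; exact measurableSet_Icc) measurable_const measurable_const
  · have h : haar i = haarJK (Nat.log 2 (i - 1)) (i - 1 - 2 ^ Nat.log 2 (i - 1)) := by
      funext t; simp [haar, hi]
    rw [h]
    exact measurable_haarJK _ _

lemma abs_haar_le (i : ℕ) (t : ℝ) : ‖haar i t‖ ≤ 1 := by
  unfold haar haarJK
  split_ifs <;> simp

lemma intervalIntegrable_haar (i : ℕ) (c d : ℝ) :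
    IntervalIntegrable (haar i) volume c d := by
  rw [intervalIntegrable_iff]
  exact Measure.integrableOn_of_bounded measure_Ioc_lt_top.ne
    (measurable_haar i).aestronglyMeasurable
    (Filter.Eventually.of_forall fun t => abs_haar_le i t)

/-- Taylor representation with Haar second derivative. -/
lemma taylor_haar (M : ℕ) (c : ℕ → ℝ) (f : ℝ → ℝ)
    (hf : Differentiable ℝ f) (hf' : Differentiable ℝ (deriv f))
    (hf'' : ∀ t ∈ Set.Icc (0:ℝ) 1,
      deriv (deriv f) t = ∑ i ∈ Finset.Icc 1 (2 * M), c i * haar i t)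
    (t : ℝ) (ht : t ∈ Set.Icc (0:ℝ) 1) :
    f t = f 0 + deriv f 0 * t + ∑ i ∈ Finset.Icc 1 (2 * M), c i * P2 i t := by
  obtain ⟨ht0, ht1⟩ := ht
  have huIcc : Set.uIcc (0:ℝ) t = Set.Icc 0 t := Set.uIcc_of_le ht0
  have hsub : Set.Icc (0:ℝ) t ⊆ Set.Icc 0 1 := Set.Icc_subset_Icc le_rfl ht1
  -- the Haar sum
  set g : ℝ → ℝ := fun s => ∑ i ∈ Finset.Icc 1 (2 * M), c i * haar i s with hg
  have hgint : IntervalIntegrable g volume 0 t := by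
    have hge : g = ∑ i ∈ Finset.Icc 1 (2 * M), (fun s => c i * haar i s) := by
      funext s
      rw [hg, Finset.sum_apply]
    rw [hge]
    exact IntervalIntegrable.sum _ fun i _ => (intervalIntegrable_haar i 0 t).const_mul (c i)
  have hf''int : IntervalIntegrable (deriv (deriv f)) volume 0 t := by
    apply hgint.congr
    intro s hs
    exact (hf'' s (hsub (huIcc ▸ Set.uIoc_subset_uIcc hs))).symm
  -- integration by parts
  have parts : ∫ x in (0:ℝ)..t, (t - x) * deriv (deriv f) x
      = (t - t) * deriv f t - (t - 0) * deriv f 0 - ∫ x in (0:ℝ)..t, (-1) * deriv f x := by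
    apply intervalIntegral.integral_mul_deriv_eq_deriv_mul_of_hasDerivAt
    · exact (continuous_const.sub continuous_id).continuousOn
    · exact hf'.continuous.continuousOn
    · intro x _
      simpa using (hasDerivAt_id x).const_sub t
    · intro x _
      exact (hf' x).hasDerivAt
    · exact intervalIntegrable_const
    · exact hf''int
  have hfund : ∫ x in (0:ℝ)..t, deriv f x = f t - f 0 :=
    intervalIntegral.integral_deriv_eq_sub (fun x _ => hf x)
      (hf'.continuous.continuousOn.intervalIntegrable)
  have hcongr : ∫ x in (0:ℝ)..t, (t - x) * deriv (deriv f) x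
      = ∫ x in (0:ℝ)..t, (t - x) * g x := by
    apply intervalIntegral.integral_congr
    intro x hx
    simp only
    rw [hf'' x (hsub (huIcc ▸ hx))]
  have hsum : ∫ x in (0:ℝ)..t, (t - x) * g x
      = ∑ i ∈ Finset.Icc 1 (2 * M), c i * P2 i t := by
    have : ∀ x, (t - x) * g x = ∑ i ∈ Finset.Icc 1 (2 * M), c i * ((t - x) * haar i x) := by
      intro x
      rw [hg, Finset.mul_sum]
      exact Finset.sum_congr rfl fun i _ => by ring
    simp_rw [this]
    rw [intervalIntegral.integral_finset_sum]
    · exact Finset.sum_congr rfl fun i _ => by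
        rw [intervalIntegral.integral_const_mul]; rfl
    · intro i _
      exact (((intervalIntegrable_haar i 0 t).continuousOn_mul
        (continuous_const.sub continuous_id).continuousOn).const_mul (c i))
  have := parts
  rw [hcongr, hsum, intervalIntegral.integral_const_mul, hfund] at this
  linarith [this]

/-- integrating the Haar expansions of `y''` and `z''` with the
four-point boundary conditions `y(0) = 0`, `y(1) = n₁z(v₁)`, `z(0) = 0`,
`z(1) = n₂y(v₂)`. -/
theorem haar_four_point_representation (M : ℕ) (hM : 1 ≤ M) (a b : ℕ → ℝ)
    (n₁ n₂ v₁ v₂ : ℝ)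
    (hn₁ : n₁ ∈ Set.Ioo (0:ℝ) 1) (hn₂ : n₂ ∈ Set.Ioo (0:ℝ) 1)
    (hv₁ : v₁ ∈ Set.Ioo (0:ℝ) 1) (hv₂ : v₂ ∈ Set.Ioo (0:ℝ) 1)
    (hne : n₁ * n₂ * v₁ * v₂ ≠ 1)
    (y z : ℝ → ℝ)
    (hy : Differentiable ℝ y) (hy' : Differentiable ℝ (deriv y))
    (hz : Differentiable ℝ z) (hz' : Differentiable ℝ (deriv z))
    (hy'' : ∀ t ∈ Set.Icc (0:ℝ) 1,
      deriv (deriv y) t = ∑ i ∈ Finset.Icc 1 (2 * M), a i * haar i t)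
    (hz'' : ∀ t ∈ Set.Icc (0:ℝ) 1,
      deriv (deriv z) t = ∑ i ∈ Finset.Icc 1 (2 * M), b i * haar i t)
    (hy0 : y 0 = 0) (hy1 : y 1 = n₁ * z v₁)
    (hz0 : z 0 = 0) (hz1 : z 1 = n₂ * y v₂) :
    ∀ t ∈ Set.Icc (0:ℝ) 1,
      y t = n₁ * t / (1 - n₁ * n₂ * v₁ * v₂) *
          (n₂ * v₁ * ∑ i ∈ Finset.Icc 1 (2 * M), a i * (P2 i v₂ - v₂ * P2 i 1) +
            ∑ i ∈ Finset.Icc 1 (2 * M), b i * (P2 i v₁ - v₁ * P2 i 1)) +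
          ∑ i ∈ Finset.Icc 1 (2 * M), a i * (P2 i t - t * P2 i 1) ∧
      z t = n₂ * t / (1 - n₁ * n₂ * v₁ * v₂) *
          (∑ i ∈ Finset.Icc 1 (2 * M), a i * (P2 i v₂ - v₂ * P2 i 1) +
            v₂ * n₁ * ∑ i ∈ Finset.Icc 1 (2 * M), b i * (P2 i v₁ - v₁ * P2 i 1)) +
          ∑ i ∈ Finset.Icc 1 (2 * M), b i * (P2 i t - t * P2 i 1) := by
  intro t ht
  set Sa : ℝ → ℝ := fun x => ∑ i ∈ Finset.Icc 1 (2 * M), a i * P2 i x with hSa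
  set Sb : ℝ → ℝ := fun x => ∑ i ∈ Finset.Icc 1 (2 * M), b i * P2 i x with hSb
  set A := deriv y 0
  set B := deriv z 0
  have hyt : ∀ s ∈ Set.Icc (0:ℝ) 1, y s = A * s + Sa s := fun s hs => by
    have := taylor_haar M a y hy hy' hy'' s hs; rw [this, hy0]; ring
  have hzt : ∀ s ∈ Set.Icc (0:ℝ) 1, z s = B * s + Sb s := fun s hs => by
    have := taylor_haar M b z hz hz' hz'' s hs; rw [this, hz0]; ring
  have h1 : (1:ℝ) ∈ Set.Icc (0:ℝ) 1 := by norm_num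
  have hv₁m : v₁ ∈ Set.Icc (0:ℝ) 1 := Set.Ioo_subset_Icc_self hv₁
  have hv₂m : v₂ ∈ Set.Icc (0:ℝ) 1 := Set.Ioo_subset_Icc_self hv₂
  have e1 : A * 1 + Sa 1 = n₁ * (B * v₁ + Sb v₁) := by
    rw [← hyt 1 h1, ← hzt v₁ hv₁m]; exact hy1
  have e2 : B * 1 + Sb 1 = n₂ * (A * v₂ + Sa v₂) := by
    rw [← hzt 1 h1, ← hyt v₂ hv₂m]; exact hz1
  have hD : 1 - n₁ * n₂ * v₁ * v₂ ≠ 0 := sub_ne_zero.mpr (fun h => hne h.symm)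
  have hA : A * (1 - n₁ * n₂ * v₁ * v₂)
      = n₁ * n₂ * v₁ * Sa v₂ + n₁ * Sb v₁ - Sa 1 - n₁ * v₁ * Sb 1 := by
    linear_combination e1 + n₁ * v₁ * e2
  have hB : B * (1 - n₁ * n₂ * v₁ * v₂)
      = n₂ * Sa v₂ + n₁ * n₂ * v₂ * Sb v₁ - Sb 1 - n₂ * v₂ * Sa 1 := by
    linear_combination e2 + n₂ * v₂ * e1
  have hsa : ∀ s : ℝ, ∑ i ∈ Finset.Icc 1 (2 * M), a i * (P2 i s - s * P2 i 1)
      = Sa s - s * Sa 1 := by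
    intro s
    rw [hSa, Finset.mul_sum, ← Finset.sum_sub_distrib]
    exact Finset.sum_congr rfl fun i _ => by ring
  have hsb : ∀ s : ℝ, ∑ i ∈ Finset.Icc 1 (2 * M), b i * (P2 i s - s * P2 i 1)
      = Sb s - s * Sb 1 := by
    intro s
    rw [hSb, Finset.mul_sum, ← Finset.sum_sub_distrib]
    exact Finset.sum_congr rfl fun i _ => by ring
  constructor
  · rw [hyt t ht, hsa, hsa, hsb, eq_comm, div_mul_eq_mul_div, div_add' _ _ _ hD,
      div_eq_iff hD]
    linear_combination (-t) * hA
  · rw [hzt t ht, hsa, hsb, hsb, eq_comm, div_mul_eq_mul_div, div_add' _ _ _ hD,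
      div_eq_iff hD]
    linear_combination (-t) * hB
end
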